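/- Let (K, w, A) be a weighted graph with V finite, and suppose there is an integer a with w(σ) = a for every edge σ of K. Then for any spanning tree B of K, π₁(K, w, A) is isomorphic to π₁(K, w, B). -/

import Mathlib

open scoped Classical

variable {V : Type*}

/-- Generators of the weighted fundamental group: edges `ab` of `K` with `a < b`. -/
def WGen [LinearOrder V] (K : SimpleGraph V) : Type _ :=
  {p : V × V // p.1 < p.2 ∧ K.Adj p.1 p.2}

/-- The relators of the weighted fundamental group: (1) `g_{ab}^{w(ab)}` for edges of the
spanning tree `A`; (2) `g_{ab}^{w(ab)} · (g_{av}^{w(av)} · g_{vb}^{w(vb)})⁻¹` for 2-simplices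
`{a, v, b} ∈ T` with `a < v < b`. -/
def WRelators [LinearOrder V] (K : SimpleGraph V) (T : Set (Finset V))
    (w : Sym2 V → ℤ) (A : SimpleGraph V) : Set (FreeGroup (WGen K)) :=
  {r | ∃ e : WGen K, A.Adj e.1.1 e.1.2 ∧ r = FreeGroup.of e ^ w s(e.1.1, e.1.2)} ∪
  {r | ∃ (a v b : V) (hav : a < v) (hvb : v < b)
       (h1 : K.Adj a v) (h2 : K.Adj v b) (h3 : K.Adj a b),
       ({a, v, b} : Finset V) ∈ T ∧
       r = FreeGroup.of (⟨(a, b), hav.trans hvb, h3⟩ : WGen K) ^ w s(a, b) *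
         (FreeGroup.of (⟨(a, v), hav, h1⟩ : WGen K) ^ w s(a, v) *
          FreeGroup.of (⟨(v, b), hvb, h2⟩ : WGen K) ^ w s(v, b))⁻¹}

/-- The weighted fundamental group `π₁(K, w, A)` of the WSC `(K, T, w, A)`,
as a presented group. -/
def wpi1 [LinearOrder V] (K : SimpleGraph V) (T : Set (Finset V))
    (w : Sym2 V → ℤ) (A : SimpleGraph V) : Type _ :=
  PresentedGroup (WRelators K T w A)

noncomputable instance [LinearOrder V] (K : SimpleGraph V) (T : Set (Finset V))
    (w : Sym2 V → ℤ) (A : SimpleGraph V) : Group (wpi1 K T w A) := by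
  unfold wpi1; infer_instance

/-- `(K, T, w, A)` is a weighted simplicial complex: `K` is a connected simple graph,
`T` is a set of 2-simplices (unordered triples of distinct pairwise adjacent vertices),
and `A` is a spanning tree of `K`. -/
structure IsWSC (K : SimpleGraph V) (T : Set (Finset V))
    (w : Sym2 V → ℤ) (A : SimpleGraph V) : Prop where
  conn : K.Connected
  tri : ∀ t ∈ T, ∃ a v b : V, a ≠ v ∧ v ≠ b ∧ a ≠ b ∧ t = {a, v, b} ∧
        K.Adj a v ∧ K.Adj v b ∧ K.Adj a b
  tree : A.IsTree
  le : A ≤ K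

/-- Exactly two of the three edges of every 2-simplex of `T` lie in the tree `A`. -/
def ExactlyTwo [LinearOrder V] (T : Set (Finset V)) (A : SimpleGraph V) : Prop :=
  ∀ a v b : V, a < v → v < b → ({a, v, b} : Finset V) ∈ T →
    ((if A.Adj a b then 1 else 0) + (if A.Adj a v then 1 else 0) +
      (if A.Adj v b then 1 else 0) : ℕ) = 2

/-- Corollary 3.3. Let `(K, w, A)` be a weighted graph on a finite vertex
type, with all weights equal to a constant `a ∈ ℤ`. Then for any spanning tree `B` of `K` we
have `π₁(K, w, A) ≅ π₁(K, w, B)`. -/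
noncomputable def presentedGroup_congr {α : Type*} {r s : Set (FreeGroup α)} (h : r = s) :
    PresentedGroup r ≃* PresentedGroup s := by subst h; exact MulEquiv.refl _

lemma wgen_equiv [LinearOrder V] (K G : SimpleGraph V) (h : G ≤ K) :
    Nonempty ({e : WGen K // G.Adj e.1.1 e.1.2} ≃ G.edgeSet) := by
  refine ⟨Equiv.ofBijective (fun e => ⟨s(e.1.1.1, e.1.1.2), e.2⟩) ⟨?_, ?_⟩⟩
  · rintro ⟨⟨⟨a,b⟩,hab⟩,h1⟩ ⟨⟨⟨c,d⟩,hcd⟩,h2⟩ he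
    replace he : s(a, b) = s(c, d) := congrArg Subtype.val he
    simp only [Subtype.mk.injEq, Sym2.eq, Sym2.eq_iff, Sym2.rel_iff', Prod.mk.injEq] at he ⊢
    rcases he with ⟨rfl, rfl⟩ | ⟨rfl, rfl⟩
    · simp
    · exact absurd hcd.1 (not_lt.2 hab.1.le)
  · rintro ⟨s, hs⟩
    induction s using Sym2.ind with
    | _ x y =>
      simp only [SimpleGraph.mem_edgeSet] at hs
      rcases lt_or_gt_of_ne hs.ne with hlt | hgt
      · exact ⟨⟨⟨(x,y), hlt, h hs⟩, hs⟩, rfl⟩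
      · exact ⟨⟨⟨(y,x), hgt, h hs.symm⟩, hs.symm⟩, by simp [Sym2.eq_swap]⟩

theorem weighted_pi1_graph_tree_indep [LinearOrder V] [Finite V] (K : SimpleGraph V)
    (w : Sym2 V → ℤ) (A B : SimpleGraph V)
    (hA : IsWSC K (∅ : Set (Finset V)) w A) (hB : IsWSC K (∅ : Set (Finset V)) w B)
    (a : ℤ) (hw : ∀ x y : V, K.Adj x y → w s(x, y) = a) :
    Nonempty (wpi1 K (∅ : Set (Finset V)) w A ≃* wpi1 K (∅ : Set (Finset V)) w B) := by
  haveI : Fintype V := Fintype.ofFinite V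
  haveI : Finite (WGen K) := by unfold WGen; infer_instance
  haveI : Fintype (WGen K) := Fintype.ofFinite _
  -- cardinalities of tree-edge generators agree
  have hcardG : ∀ G : SimpleGraph V, G ≤ K → G.IsTree →
      Fintype.card {e : WGen K // G.Adj e.1.1 e.1.2} = Fintype.card V - 1 := by
    intro G hle ht
    haveI : Fintype G.edgeSet := Fintype.ofFinite _
    obtain ⟨eq⟩ := wgen_equiv K G hle
    have h2 := ht.card_edgeFinset
    rw [Fintype.card_congr eq, ← Set.toFinset_card]
    unfold SimpleGraph.edgeFinset at h2
    omega
  have hcard : Fintype.card {e : WGen K // A.Adj e.1.1 e.1.2} =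
      Fintype.card {e : WGen K // B.Adj e.1.1 e.1.2} := by
    rw [hcardG A hA.le hA.tree, hcardG B hB.le hB.tree]
  have hcard' : Fintype.card {e : WGen K // ¬ A.Adj e.1.1 e.1.2} =
      Fintype.card {e : WGen K // ¬ B.Adj e.1.1 e.1.2} := by
    rw [Fintype.card_subtype_compl, Fintype.card_subtype_compl, hcard]
  let e1 := Fintype.equivOfCardEq hcard
  let e2 := Fintype.equivOfCardEq hcard'
  let σ : WGen K ≃ WGen K :=
    (Equiv.sumCompl (fun e : WGen K => A.Adj e.1.1 e.1.2)).symm.trans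
      ((e1.sumCongr e2).trans (Equiv.sumCompl (fun e : WGen K => B.Adj e.1.1 e.1.2)))
  have hσ : ∀ e : WGen K, B.Adj (σ e).1.1 (σ e).1.2 ↔ A.Adj e.1.1 e.1.2 := by
    intro e
    by_cases h : A.Adj e.1.1 e.1.2
    · have : σ e = (e1 ⟨e, h⟩ : {e : WGen K // B.Adj e.1.1 e.1.2}).1 := by
        show (Equiv.sumCompl fun e : WGen K => B.Adj e.1.1 e.1.2)
          ((e1.sumCongr e2) ((Equiv.sumCompl fun e : WGen K => A.Adj e.1.1 e.1.2).symm e)) = _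
        rw [Equiv.sumCompl_symm_apply_of_pos (p := fun e : WGen K => A.Adj e.1.1 e.1.2) (a := e) h, Equiv.sumCongr_apply, Sum.map_inl,
          Equiv.sumCompl_apply_inl]
      rw [this]
      exact iff_of_true (e1 ⟨e, h⟩).2 h
    · have : σ e = (e2 ⟨e, h⟩ : {e : WGen K // ¬ B.Adj e.1.1 e.1.2}).1 := by
        show (Equiv.sumCompl fun e : WGen K => B.Adj e.1.1 e.1.2)
          ((e1.sumCongr e2) ((Equiv.sumCompl fun e : WGen K => A.Adj e.1.1 e.1.2).symm e)) = _
        rw [Equiv.sumCompl_symm_apply_of_neg (p := fun e : WGen K => A.Adj e.1.1 e.1.2) (a := e) h, Equiv.sumCongr_apply, Sum.map_inr,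
          Equiv.sumCompl_apply_inr]
      rw [this]
      exact iff_of_false (e2 ⟨e, h⟩).2 h
  -- relator sets correspond under σ
  have hset : FreeGroup.freeGroupCongr σ '' WRelators K (∅ : Set (Finset V)) w A =
      WRelators K (∅ : Set (Finset V)) w B := by
    have hAw : ∀ e : WGen K, w s(e.1.1, e.1.2) = a := fun e => hw _ _ e.2.2
    ext r
    simp only [WRelators, Set.mem_union, Set.mem_setOf_eq, Set.mem_image]
    constructor
    · rintro ⟨s, hs | hs, rfl⟩
      · obtain ⟨e, he, rfl⟩ := hs
        refine Or.inl ⟨σ e, (hσ e).2 he, ?_⟩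
        rw [hAw, hAw]
        simp
      · exact absurd hs (by simp)
    · rintro (⟨f, hf, rfl⟩ | hf)
      · refine ⟨FreeGroup.of (σ.symm f) ^ w s((σ.symm f).1.1, (σ.symm f).1.2),
          Or.inl ⟨σ.symm f, ?_, rfl⟩, ?_⟩
        · have := (hσ (σ.symm f)).1
          simp only [Equiv.apply_symm_apply] at this
          exact this hf
        · rw [hAw, hAw]
          simp
      · exact absurd hf (by simp)
  refine ⟨?_⟩
  unfold wpi1
  exact (PresentedGroup.equivPresentedGroup _ σ).trans (presentedGroup_congr hset)
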